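/- For any binary relation R on a set X, the equivalence closure of the complement of the symmetric closure of R equals the complement of the largest apartness relation contained in the symmetric closure of R (the apartness interior). -/

import Mathlib

/-- An apartness relation: irreflexive, symmetric, cotransitive. -/
def IsApartness {X : Type*} (A : X → X → Prop) : Prop :=
  (∀ x, ¬ A x x) ∧ (∀ x y, A x y → A y x) ∧ (∀ x y, A x y → ∀ z, A x z ∨ A y z)

/-- The apartness interior of `S`: the largest apartness relation contained in `S`,
realised as the union of all apartness relations contained in `S`. -/
def apartnessInterior {X : Type*} (S : X → X → Prop) : X → X → Prop :=
  fun x y => ∃ A : X → X → Prop, IsApartness A ∧ (∀ a b, A a b → S a b) ∧ A x y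

/-- The equivalence closure of the complement of the symmetric closure of `R`
equals the complement of the apartness interior of the symmetric closure of `R`. -/
theorem eqvGen_compl_symmClosure_eq_compl_apartnessInterior {X : Type*}
    (R : X → X → Prop) :
    ∀ x y, Relation.EqvGen (fun a b => ¬ (R a b ∨ R b a)) x y ↔
      ¬ apartnessInterior (fun a b => R a b ∨ R b a) x y := by
  intro x y
  set S : X → X → Prop := fun a b => R a b ∨ R b a with hS
  constructor
  · intro h ⟨A, ⟨hirr, hsym, hcot⟩, hsub, hAxy⟩
    -- ¬A is an equivalence relation containing ¬S
    have key : ∀ a b, Relation.EqvGen (fun a b => ¬ S a b) a b → ¬ A a b := by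
      intro a b hab
      induction hab with
      | rel a b h => exact fun hA => h (hsub a b hA)
      | refl a => exact hirr a
      | symm a b _ ih => exact fun hA => ih (hsym b a hA)
      | trans a b c _ _ ih1 ih2 =>
        intro hA
        rcases hcot a c hA b with h1 | h2
        · exact ih1 h1
        · exact ih2 (hsym c b h2)
    exact key x y h hAxy
  · intro h
    by_contra hne
    apply h
    refine ⟨fun a b => ¬ Relation.EqvGen (fun a b => ¬ S a b) a b, ⟨?_, ?_, ?_⟩, ?_, hne⟩
    · exact fun a ha => ha (Relation.EqvGen.refl a)
    · exact fun a b hab hba => hab (Relation.EqvGen.symm _ _ hba)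
    · intro a b hab c
      by_contra hc
      push_neg at hc
      obtain ⟨h1, h2⟩ := hc
      exact hab (h1.trans _ _ _ (Relation.EqvGen.symm _ _ h2))
    · intro a b hab
      by_contra hnS
      exact hab (Relation.EqvGen.rel a b hnS)
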